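/- For every R ≥ 0, ϑ_p(R) ≤ I_p(X;Y). Moreover, if s : 𝒳 → 𝒮 is sufficient, then equality is achieved at R = H(pS): ϑ_p(H(pS)) = I_p(X;Y). -/

import Mathlib

open Finset

noncomputable section
open scoped Classical

variable {𝒳 𝒴 𝒮 𝒯 : Type*}

/-- Marginal of a joint pmf on the first coordinate. -/
def margX [Fintype 𝒴] (p : 𝒳 × 𝒴 → ℝ) (x : 𝒳) : ℝ := ∑ y, p (x, y)

/-- Marginal of a joint pmf on the second coordinate. -/
def margY [Fintype 𝒳] (p : 𝒳 × 𝒴 → ℝ) (y : 𝒴) : ℝ := ∑ x, p (x, y)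

/-- Distribution of `S = s(X)`. -/
def margS [Fintype 𝒳] [Fintype 𝒴] (p : 𝒳 × 𝒴 → ℝ) (s : 𝒳 → 𝒮) (s0 : 𝒮) : ℝ :=
  ∑ x ∈ Finset.univ.filter (fun x => s x = s0), margX p x

/-- Distribution of `T = t(Y)`. -/
def margT [Fintype 𝒳] [Fintype 𝒴] (p : 𝒳 × 𝒴 → ℝ) (t : 𝒴 → 𝒯) (t0 : 𝒯) : ℝ :=
  ∑ y ∈ Finset.univ.filter (fun y => t y = t0), margY p y

/-- Joint distribution of `(S, T) = (s(X), t(Y))`. -/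
def margST [Fintype 𝒳] [Fintype 𝒴] (p : 𝒳 × 𝒴 → ℝ) (s : 𝒳 → 𝒮) (t : 𝒴 → 𝒯)
    (w : 𝒮 × 𝒯) : ℝ :=
  ∑ x ∈ Finset.univ.filter (fun x => s x = w.1),
    ∑ y ∈ Finset.univ.filter (fun y => t y = w.2), p (x, y)

/-- `q` is a probability mass function. -/
def IsPMF {Z : Type*} [Fintype Z] (q : Z → ℝ) : Prop := (∀ z, 0 ≤ q z) ∧ ∑ z, q z = 1

/-- `s` is a sufficient statistic of `X` for `Y` (Markov chain `X - S - Y`). -/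
def SuffS [Fintype 𝒴] (p : 𝒳 × 𝒴 → ℝ) (s : 𝒳 → 𝒮) : Prop :=
  ∀ x x' y, s x = s x' → p (x, y) * margX p x' = p (x', y) * margX p x

/-- `t` is a sufficient statistic of `Y` for `X` (Markov chain `X - T - Y`). -/
def SuffT [Fintype 𝒳] (p : 𝒳 × 𝒴 → ℝ) (t : 𝒴 → 𝒯) : Prop :=
  ∀ x y y', t y = t y' → p (x, y) * margY p y' = p (x, y') * margY p y

/-- Mutual information of a joint pmf on `A × B`. -/
def mutInfo {A B : Type*} [Fintype A] [Fintype B] (q : A × B → ℝ) : ℝ :=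
  ∑ z : A × B, if 0 < q z then
    q z * Real.log (q z / ((∑ b, q (z.1, b)) * (∑ a, q (a, z.2)))) else 0

/-- Shannon entropy of a pmf on a finite type. -/
def entropy {W : Type*} [Fintype W] (r : W → ℝ) : ℝ :=
  -∑ w, if 0 < r w then r w * Real.log (r w) else 0

/-- Wyner's common information of a joint pmf `m` on `A × B`. -/
def wynerCI {A B : Type*} [Fintype A] [Fintype B] (m : A × B → ℝ) : ℝ :=
  sInf { c | ∃ (n : ℕ) (q : A × B × Fin n → ℝ),
    IsPMF q ∧
    (∀ a b, ∑ w, q (a, b, w) = m (a, b)) ∧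
    (∀ a b w, q (a, b, w) * (∑ a', ∑ b', q (a', b', w)) =
      (∑ b', q (a, b', w)) * (∑ a', q (a', b, w))) ∧
    c = mutInfo (fun z : Fin n × (A × B) => q (z.2.1, z.2.2, z.1)) }

/-- Gács–Körner common information of a joint pmf `m` on `A × B`. -/
def gkCI {A B : Type*} [Fintype A] [Fintype B] (m : A × B → ℝ) : ℝ :=
  sSup { c | ∃ (n : ℕ) (f : A → Fin n) (g : B → Fin n),
    (∑ z : A × B, if f z.1 ≠ g z.2 then m z else 0) = 0 ∧
    c = entropy (fun w : Fin n =>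
      ∑ a ∈ Finset.univ.filter (fun a => f a = w), ∑ b, m (a, b)) }

/-- Information-bottleneck Lagrangian value. -/
def ibL {A B : Type*} [Fintype A] [Fintype B] (m : A × B → ℝ) (β : ℝ) : ℝ :=
  sInf { c | ∃ (n : ℕ) (r : A → Fin n → ℝ),
    (∀ a u, 0 ≤ r a u) ∧ (∀ a, ∑ u, r a u = 1) ∧
    c = mutInfo (fun z : Fin n × A => r z.2 z.1 * ∑ b, m (z.2, b))
        - β * mutInfo (fun z : Fin n × B => ∑ a, r a z.1 * m (a, z.2)) }

/-- Information-bottleneck curve. -/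
def ibCurve {A B : Type*} [Fintype A] [Fintype B] (m : A × B → ℝ) (R : ℝ) : ℝ :=
  sSup { c | ∃ (n : ℕ) (r : A → Fin n → ℝ),
    (∀ a u, 0 ≤ r a u) ∧ (∀ a, ∑ u, r a u = 1) ∧
    mutInfo (fun z : Fin n × A => r z.2 z.1 * ∑ b, m (z.2, b)) ≤ R ∧
    c = mutInfo (fun z : Fin n × B => ∑ a, r a z.1 * m (a, z.2)) }


/-- Drop the positivity guard in `mutInfo` when `q` is nonnegative. -/
lemma mutInfo_eq_sum {A B : Type*} [Fintype A] [Fintype B] (q : A × B → ℝ)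
    (hq : ∀ z, 0 ≤ q z) :
    mutInfo q = ∑ z : A × B,
      q z * Real.log (q z / ((∑ b, q (z.1, b)) * (∑ a, q (a, z.2)))) := by
  unfold mutInfo
  refine Finset.sum_congr rfl fun z _ => ?_
  split_ifs with h
  · rfl
  · have : q z = 0 := le_antisymm (not_lt.mp h) (hq z)
    simp [this]

/-- Drop the positivity guard in `entropy` when `r` is nonnegative. -/
lemma entropy_eq_sum {W : Type*} [Fintype W] (r : W → ℝ) (hr : ∀ w, 0 ≤ r w) :
    entropy r = -∑ w, r w * Real.log (r w) := by
  unfold entropy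
  congr 1
  refine Finset.sum_congr rfl fun w _ => ?_
  split_ifs with h
  · rfl
  · have : r w = 0 := le_antisymm (not_lt.mp h) (hr w)
    simp [this]

/-- Gibbs' inequality / nonnegativity of relative entropy. -/
lemma kl_nonneg {Z : Type*} [Fintype Z] (q m : Z → ℝ)
    (hq0 : ∀ z, 0 ≤ q z) (hm0 : ∀ z, 0 ≤ m z)
    (hq1 : ∑ z, q z = 1) (hm1 : ∑ z, m z ≤ 1)
    (hqm : ∀ z, 0 < q z → 0 < m z) :
    0 ≤ ∑ z, q z * Real.log (q z / m z) := by
  have key : ∀ z, q z - m z ≤ q z * Real.log (q z / m z) := by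
    intro z
    rcases eq_or_lt_of_le (hq0 z) with h | h
    · rw [← h]; simpa using hm0 z
    · have hm := hqm z h
      have hlog : Real.log (m z / q z) ≤ m z / q z - 1 :=
        Real.log_le_sub_one_of_pos (by positivity)
      have h1 : Real.log (q z / m z) = - Real.log (m z / q z) := by
        rw [← Real.log_inv]; congr 1; field_simp
      have h2 : 1 - m z / q z ≤ Real.log (q z / m z) := by rw [h1]; linarith
      have h3 : q z * (1 - m z / q z) ≤ q z * Real.log (q z / m z) :=
        mul_le_mul_of_nonneg_left h2 h.le
      have h4 : q z * (1 - m z / q z) = q z - m z := by field_simp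
      linarith
  have hsum : ∑ z, (q z - m z) ≤ ∑ z, q z * Real.log (q z / m z) :=
    Finset.sum_le_sum fun z _ => key z
  rw [Finset.sum_sub_distrib, hq1] at hsum
  linarith

section DPI
variable [Fintype 𝒳] [Fintype 𝒴]

lemma margX_sum (p : 𝒳 × 𝒴 → ℝ) (hp : IsPMF p) : ∑ x, margX p x = 1 := by
  simp only [margX]; rw [← Fintype.sum_prod_type]; exact hp.2

/-- Data processing inequality: for any channel `r` from `𝒳` to `Fin n`,
`I(U;Y) ≤ I(X;Y)`. -/
lemma dpi (p : 𝒳 × 𝒴 → ℝ) (hp : IsPMF p)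
    (hX : ∀ x, 0 < margX p x) (hY : ∀ y, 0 < margY p y)
    (n : ℕ) (r : 𝒳 → Fin n → ℝ) (hr0 : ∀ a u, 0 ≤ r a u)
    (hr1 : ∀ a, ∑ u, r a u = 1) :
    mutInfo (fun z : Fin n × 𝒴 => ∑ x, r x z.1 * p (x, z.2)) ≤ mutInfo p := by
  classical
  have hp0 : ∀ z, 0 ≤ p z := hp.1
  set qUY : Fin n → 𝒴 → ℝ := fun u y => ∑ x, r x u * p (x, y) with hqUYdef
  set qU : Fin n → ℝ := fun u => ∑ x, r x u * margX p x with hqUdef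
  have hqUY0 : ∀ u y, 0 ≤ qUY u y := fun u y =>
    Finset.sum_nonneg fun x _ => mul_nonneg (hr0 x u) (hp0 _)
  have hqU0 : ∀ u, 0 ≤ qU u := fun u =>
    Finset.sum_nonneg fun x _ => mul_nonneg (hr0 x u) (hX x).le
  -- marginals
  have hM1 : ∀ u, (∑ b, qUY u b) = qU u := by
    intro u
    show (∑ b, ∑ x, r x u * p (x, b)) = ∑ x, r x u * margX p x
    rw [Finset.sum_comm]
    exact Finset.sum_congr rfl fun x _ => by rw [margX, Finset.mul_sum]
  have hM2 : ∀ y, (∑ a, qUY a y) = margY p y := by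
    intro y
    show (∑ a, ∑ x, r x a * p (x, y)) = margY p y
    rw [Finset.sum_comm, margY]
    exact Finset.sum_congr rfl fun x _ => by
      rw [← Finset.sum_mul, hr1, one_mul]
  have hqUsum : ∑ u, qU u = 1 := by
    show (∑ u, ∑ x, r x u * margX p x) = 1
    rw [Finset.sum_comm, ← margX_sum p hp]
    exact Finset.sum_congr rfl fun x _ => by
      rw [← Finset.sum_mul, hr1, one_mul]
  -- lower bounds
  have hqUYlb : ∀ u x y, r x u * p (x, y) ≤ qUY u y := fun u x y =>
    Finset.single_le_sum (fun x' _ => mul_nonneg (hr0 x' u) (hp0 (x', y))) (Finset.mem_univ x)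
  have hqUlb : ∀ u x, r x u * margX p x ≤ qU u := fun u x =>
    Finset.single_le_sum (fun x _ => mul_nonneg (hr0 x u) (hX x).le) (Finset.mem_univ x)
  -- log-ratio abbreviations
  set L1 : 𝒳 → 𝒴 → ℝ := fun x y => Real.log (p (x, y) / (margX p x * margY p y))
    with hL1def
  set L2 : Fin n → 𝒴 → ℝ := fun u y => Real.log (qUY u y / (qU u * margY p y))
    with hL2def
  -- rewrite both mutual informations as plain sums
  have hIUY : mutInfo (fun z : Fin n × 𝒴 => ∑ x, r x z.1 * p (x, z.2))
      = ∑ u, ∑ y, qUY u y * L2 u y := by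
    rw [mutInfo_eq_sum _ (fun z => hqUY0 z.1 z.2), Fintype.sum_prod_type]
    refine Finset.sum_congr rfl fun u _ => Finset.sum_congr rfl fun y _ => ?_
    rw [show (∑ b, ∑ x, r x u * p (x, b)) = qU u from hM1 u,
        show (∑ a, ∑ x, r x a * p (x, y)) = margY p y from hM2 y]
  have hIp : mutInfo p = ∑ x, ∑ y, p (x, y) * L1 x y := by
    rw [mutInfo_eq_sum _ hp0, Fintype.sum_prod_type]
    exact Finset.sum_congr rfl fun x _ => Finset.sum_congr rfl fun y _ => rfl
  -- the joint and the "Markov" comparison measure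
  set q : Fin n × 𝒳 × 𝒴 → ℝ := fun z => r z.2.1 z.1 * p z.2 with hqdef
  set m : Fin n × 𝒳 × 𝒴 → ℝ :=
    fun z => qUY z.1 z.2.2 * (r z.2.1 z.1 * margX p z.2.1) / qU z.1 with hmdef
  have hq0 : ∀ z, 0 ≤ q z := fun z => mul_nonneg (hr0 _ _) (hp0 _)
  have hm0 : ∀ z, 0 ≤ m z := fun z =>
    div_nonneg (mul_nonneg (hqUY0 _ _) (mul_nonneg (hr0 _ _) (hX _).le)) (hqU0 _)
  have hq1 : ∑ z, q z = 1 := by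
    rw [Fintype.sum_prod_type, Finset.sum_comm, ← hp.2]
    refine Finset.sum_congr rfl fun z _ => ?_
    show (∑ u, r z.1 u * p z) = p z
    rw [← Finset.sum_mul, hr1, one_mul]
  have hm1 : ∑ z, m z ≤ 1 := by
    have hstep : ∀ u, ∑ x, ∑ y, m (u, x, y) = qU u := by
      intro u
      rcases eq_or_lt_of_le (hqU0 u) with h0 | h0
      · have hz : ∀ x, r x u * margX p x = 0 := by
          have h0' : (∑ x, r x u * margX p x) = 0 := h0.symm
          have := (Finset.sum_eq_zero_iff_of_nonneg
            (fun x (_ : x ∈ (Finset.univ : Finset 𝒳)) =>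
              mul_nonneg (hr0 x u) (hX x).le)).mp h0'
          exact fun x => this x (Finset.mem_univ x)
        rw [← h0]
        refine Finset.sum_eq_zero fun x _ => Finset.sum_eq_zero fun y _ => ?_
        show qUY u y * (r x u * margX p x) / qU u = 0
        rw [hz x, mul_zero, zero_div]
      · have hstep2 : ∀ x, ∑ y, m (u, x, y) = r x u * margX p x := by
          intro x
          have he : ∑ y, m (u, x, y)
              = (∑ y, qUY u y) * (r x u * margX p x) / qU u := by
            rw [Finset.sum_mul, Finset.sum_div]
          rw [he, hM1 u]
          field_simp
        rw [Finset.sum_congr rfl fun x _ => hstep2 x]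
    calc ∑ z, m z = ∑ u, qU u := by
          rw [Fintype.sum_prod_type]
          exact Finset.sum_congr rfl fun u _ => by
            rw [Fintype.sum_prod_type]; exact hstep u
      _ ≤ 1 := le_of_eq hqUsum
  have hqm : ∀ z, 0 < q z → 0 < m z := by
    intro z hz
    obtain ⟨u, x, y⟩ := z
    have hz' : 0 < r x u * p (x, y) := hz
    have hr : 0 < r x u := by
      rcases (hr0 x u).lt_or_eq with h | h
      · exact h
      · rw [← h, zero_mul] at hz'; exact absurd hz' (lt_irrefl 0)
    have hqUYpos : 0 < qUY u y := lt_of_lt_of_le hz' (hqUYlb u x y)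
    have hqUpos : 0 < qU u := lt_of_lt_of_le (mul_pos hr (hX x)) (hqUlb u x)
    show 0 < qUY u y * (r x u * margX p x) / qU u
    have := hX x
    positivity
  -- pointwise identity
  have hpt : ∀ u x y, q (u, x, y) * Real.log (q (u, x, y) / m (u, x, y))
      = q (u, x, y) * L1 x y - q (u, x, y) * L2 u y := by
    intro u x y
    rcases eq_or_lt_of_le (hq0 (u, x, y)) with h0 | h0
    · rw [← h0]; ring
    · have hz' : 0 < r x u * p (x, y) := h0
      have hr : 0 < r x u := by
        rcases (hr0 x u).lt_or_eq with h | h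
        · exact h
        · rw [← h, zero_mul] at hz'; exact absurd hz' (lt_irrefl 0)
      have hpxy : 0 < p (x, y) := by
        rcases (hp0 (x, y)).lt_or_eq with h | h
        · exact h
        · rw [← h, mul_zero] at hz'; exact absurd hz' (lt_irrefl 0)
      have hqUYpos : 0 < qUY u y := lt_of_lt_of_le hz' (hqUYlb u x y)
      have hqUpos : 0 < qU u := lt_of_lt_of_le (mul_pos hr (hX x)) (hqUlb u x)
      have hXx := hX x
      have hYy := hY y
      have hA : (0:ℝ) < p (x, y) / (margX p x * margY p y) := by positivity
      have hB : (0:ℝ) < qUY u y / (qU u * margY p y) := by positivity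
      have hratio : q (u, x, y) / m (u, x, y)
          = (p (x, y) / (margX p x * margY p y)) / (qUY u y / (qU u * margY p y)) := by
        show r x u * p (x, y) / (qUY u y * (r x u * margX p x) / qU u)
            = (p (x, y) / (margX p x * margY p y)) / (qUY u y / (qU u * margY p y))
        field_simp
      rw [hratio, Real.log_div hA.ne' hB.ne']
      show q (u, x, y) * (L1 x y - L2 u y)
          = q (u, x, y) * L1 x y - q (u, x, y) * L2 u y
      ring
  -- putting things together
  have hsplit : ∑ z, q z * Real.log (q z / m z)
      = ∑ u, ∑ x, ∑ y, (q (u, x, y) * L1 x y - q (u, x, y) * L2 u y) := by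
    rw [Fintype.sum_prod_type]
    refine Finset.sum_congr rfl fun u _ => ?_
    rw [Fintype.sum_prod_type]
    exact Finset.sum_congr rfl fun x _ => Finset.sum_congr rfl fun y _ => hpt u x y
  have hAq : ∑ u, ∑ x, ∑ y, q (u, x, y) * L1 x y = ∑ x, ∑ y, p (x, y) * L1 x y := by
    rw [Finset.sum_comm]
    refine Finset.sum_congr rfl fun x _ => ?_
    rw [Finset.sum_comm]
    refine Finset.sum_congr rfl fun y _ => ?_
    have he : ∑ u, q (u, x, y) * L1 x y
        = (∑ u, r x u) * (p (x, y) * L1 x y) := by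
      rw [Finset.sum_mul]
      exact Finset.sum_congr rfl fun u _ => by
        show r x u * p (x, y) * L1 x y = r x u * (p (x, y) * L1 x y)
        ring
    rw [he, hr1, one_mul]
  have hBq : ∑ u, ∑ x, ∑ y, q (u, x, y) * L2 u y = ∑ u, ∑ y, qUY u y * L2 u y := by
    refine Finset.sum_congr rfl fun u _ => ?_
    rw [Finset.sum_comm]
    refine Finset.sum_congr rfl fun y _ => ?_
    show (∑ x, q (u, x, y) * L2 u y) = (∑ x, r x u * p (x, y)) * L2 u y
    rw [Finset.sum_mul]
  have hkl := kl_nonneg q m hq0 hm0 hq1 hm1 hqm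
  have hfinal : (∑ x, ∑ y, p (x, y) * L1 x y) - (∑ u, ∑ y, qUY u y * L2 u y)
      = ∑ z, q z * Real.log (q z / m z) := by
    rw [hsplit, ← hAq, ← hBq]
    simp only [Finset.sum_sub_distrib]
  rw [hIUY, hIp]
  linarith [hkl, hfinal]

end DPI

section ACH
variable [Fintype 𝒳] [Fintype 𝒴] [Fintype 𝒮]

lemma mutInfo_one (p : 𝒳 × 𝒴 → ℝ) (hp : IsPMF p) (hX : ∀ x, 0 < margX p x) :
    mutInfo (fun z : Fin 1 × 𝒳 => (1:ℝ) * ∑ b, p (z.2, b)) = 0 := by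
  unfold mutInfo
  refine Finset.sum_eq_zero fun z _ => ?_
  obtain ⟨u, x⟩ := z
  show (if 0 < (1:ℝ) * margX p x then
      ((1:ℝ) * margX p x) * Real.log (((1:ℝ) * margX p x) /
        ((∑ b : 𝒳, (1:ℝ) * margX p b) * (∑ _a : Fin 1, (1:ℝ) * margX p x)))
    else 0) = 0
  have hpos : (0:ℝ) < 1 * margX p x := by rw [one_mul]; exact hX x
  rw [if_pos hpos]
  simp only [one_mul]
  rw [margX_sum p hp, one_mul]
  have h2 : (∑ _a : Fin 1, margX p x) = margX p x := by simp
  rw [h2, div_self (hX x).ne', Real.log_one, mul_zero]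

variable (e : 𝒮 ≃ Fin (Fintype.card 𝒮))

lemma margS_pos (p : 𝒳 × 𝒴 → ℝ) (hX : ∀ x, 0 < margX p x) (s : 𝒳 → 𝒮) (x : 𝒳) :
    0 < margS p s (s x) :=
  lt_of_lt_of_le (hX x) (Finset.single_le_sum (fun i _ => (hX i).le)
    (by simp [Finset.mem_filter]))

/-- The rate of the deterministic kernel `x ↦ e (s x)` is exactly `H(S)`. -/
lemma rate_eq (p : 𝒳 × 𝒴 → ℝ) (hp : IsPMF p) (hX : ∀ x, 0 < margX p x) (s : 𝒳 → 𝒮) :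
    mutInfo (fun z : Fin (Fintype.card 𝒮) × 𝒳 =>
      (if z.1 = e (s z.2) then (1:ℝ) else 0) * ∑ b, p (z.2, b))
    = entropy (margS p s) := by
  classical
  have hnn : ∀ z : Fin (Fintype.card 𝒮) × 𝒳,
      0 ≤ (if z.1 = e (s z.2) then (1:ℝ) else 0) * ∑ b, p (z.2, b) :=
    fun z => mul_nonneg (by split_ifs <;> norm_num)
      (Finset.sum_nonneg fun y _ => hp.1 _)
  have key : ∀ u, (∑ b : 𝒳, (if u = e (s b) then (1:ℝ) else 0) * margX p b)
      = margS p s (e.symm u) := by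
    intro u
    rw [margS, Finset.sum_filter]
    refine Finset.sum_congr rfl fun x _ => ?_
    by_cases h : s x = e.symm u
    · rw [if_pos h, if_pos, one_mul]
      rw [eq_comm, Equiv.apply_eq_iff_eq_symm_apply]
      exact h
    · rw [if_neg h, if_neg, zero_mul]
      rw [eq_comm, Equiv.apply_eq_iff_eq_symm_apply]
      exact h
  have key2 : ∀ x, (∑ a : Fin (Fintype.card 𝒮),
      (if a = e (s x) then (1:ℝ) else 0) * margX p x) = margX p x := by
    intro x
    rw [← Finset.sum_mul, Finset.sum_ite_eq' Finset.univ (e (s x)) (fun _ => (1:ℝ)),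
      if_pos (Finset.mem_univ _), one_mul]
  rw [mutInfo_eq_sum _ hnn, Fintype.sum_prod_type, Finset.sum_comm]
  have main : ∀ x u,
      ((if u = e (s x) then (1:ℝ) else 0) * margX p x) *
        Real.log (((if u = e (s x) then (1:ℝ) else 0) * margX p x) /
          ((∑ b : 𝒳, (if u = e (s b) then (1:ℝ) else 0) * margX p b) *
           (∑ a : Fin (Fintype.card 𝒮), (if a = e (s x) then (1:ℝ) else 0) * margX p x)))
      = if u = e (s x) then -(margX p x * Real.log (margS p s (s x))) else 0 := by
    intro x u
    rw [key u, key2 x]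
    by_cases h : u = e (s x)
    · rw [if_pos h, if_pos h, one_mul, h, Equiv.symm_apply_apply]
      have hd : margX p x / (margS p s (s x) * margX p x) = (margS p s (s x))⁻¹ := by
        have h1 : margX p x ≠ 0 := (hX x).ne'
        have h2 : margS p s (s x) ≠ 0 := (margS_pos p hX s x).ne'
        field_simp
      rw [hd, Real.log_inv]
      ring
    · rw [if_neg h, if_neg h, zero_mul, zero_mul]
  refine Eq.trans (Finset.sum_congr rfl fun x _ => Finset.sum_congr rfl fun u _ =>
    main x u) ?_
  have step2 : ∀ x : 𝒳, (∑ u : Fin (Fintype.card 𝒮),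
      if u = e (s x) then -(margX p x * Real.log (margS p s (s x))) else 0)
      = -(margX p x * Real.log (margS p s (s x))) := by
    intro x
    rw [Finset.sum_ite_eq' Finset.univ (e (s x)), if_pos (Finset.mem_univ _)]
  rw [Finset.sum_congr rfl fun x _ => step2 x]
  have hent : entropy (margS p s) = -∑ s0, margS p s s0 * Real.log (margS p s s0) :=
    entropy_eq_sum (margS p s) (fun s0 => Finset.sum_nonneg fun x _ => (hX x).le)
  rw [hent, ← Finset.sum_neg_distrib,
    ← Finset.sum_fiberwise Finset.univ s
      (fun x => -(margX p x * Real.log (margS p s (s x))))]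
  refine Finset.sum_congr rfl fun s0 _ => ?_
  rw [Finset.sum_congr rfl fun x hx => by rw [(Finset.mem_filter.mp hx).2]]
  rw [show margS p s s0 * Real.log (margS p s s0)
      = ∑ x ∈ Finset.univ.filter (fun x => s x = s0), margX p x * Real.log (margS p s s0) by
    rw [margS, Finset.sum_mul]]
  exact Finset.sum_neg_distrib _

/-- Under sufficiency, `I(S;Y) = I(X;Y)`. -/
lemma value_eq (p : 𝒳 × 𝒴 → ℝ) (hp : IsPMF p)
    (hX : ∀ x, 0 < margX p x) (hY : ∀ y, 0 < margY p y)
    (s : 𝒳 → 𝒮) (hs : SuffS p s) :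
    mutInfo (fun z : Fin (Fintype.card 𝒮) × 𝒴 =>
      ∑ a, (if z.1 = e (s a) then (1:ℝ) else 0) * p (a, z.2)) = mutInfo p := by
  classical
  set g : 𝒮 → 𝒴 → ℝ :=
    fun s0 y => ∑ x ∈ Finset.univ.filter (fun x => s x = s0), p (x, y) with hgdef
  have hfy : ∀ u y, (∑ a, (if u = e (s a) then (1:ℝ) else 0) * p (a, y))
      = g (e.symm u) y := by
    intro u y
    show _ = ∑ x ∈ Finset.univ.filter (fun x => s x = e.symm u), p (x, y)
    rw [Finset.sum_filter]
    refine Finset.sum_congr rfl fun a _ => ?_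
    by_cases h : s a = e.symm u
    · rw [if_pos h, if_pos, one_mul]
      rw [eq_comm, Equiv.apply_eq_iff_eq_symm_apply]; exact h
    · rw [if_neg h, if_neg, zero_mul]
      rw [eq_comm, Equiv.apply_eq_iff_eq_symm_apply]; exact h
  have hg0 : ∀ s0 y, 0 ≤ g s0 y :=
    fun s0 y => Finset.sum_nonneg fun x _ => hp.1 _
  have hM1 : ∀ s0, (∑ b : 𝒴, g s0 b) = margS p s s0 := by
    intro s0
    show (∑ b : 𝒴, ∑ x ∈ Finset.univ.filter (fun x => s x = s0), p (x, b)) = _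
    rw [Finset.sum_comm, margS]
    rfl
  have hM2 : ∀ y, (∑ a : Fin (Fintype.card 𝒮), g (e.symm a) y) = margY p y := by
    intro y
    rw [Equiv.sum_comp e.symm (fun s0 => g s0 y)]
    show (∑ s0, ∑ x ∈ Finset.univ.filter (fun x => s x = s0), p (x, y)) = _
    rw [Finset.sum_fiberwise Finset.univ s (fun x => p (x, y)), margY]
  have hcross : ∀ x y, p (x, y) * margS p s (s x) = g (s x) y * margX p x := by
    intro x y
    show p (x, y) * (∑ x' ∈ Finset.univ.filter (fun x' => s x' = s x), margX p x')
      = (∑ x' ∈ Finset.univ.filter (fun x' => s x' = s x), p (x', y)) * margX p x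
    rw [Finset.mul_sum, Finset.sum_mul]
    refine Finset.sum_congr rfl fun x' hx' => ?_
    exact hs x x' y ((Finset.mem_filter.mp hx').2).symm
  have hglb : ∀ x y, p (x, y) ≤ g (s x) y := by
    intro x y
    exact Finset.single_le_sum (fun i _ => hp.1 (i, y))
      (by simp [Finset.mem_filter])
  -- rewrite I(X;Y)
  have hIp : mutInfo p = ∑ x, ∑ y, p (x, y) *
      Real.log (g (s x) y / (margS p s (s x) * margY p y)) := by
    rw [mutInfo_eq_sum _ hp.1, Fintype.sum_prod_type]
    refine Finset.sum_congr rfl fun x _ => Finset.sum_congr rfl fun y _ => ?_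
    show p (x, y) * Real.log (p (x, y) / (margX p x * margY p y)) = _
    rcases eq_or_lt_of_le (hp.1 (x, y)) with h0 | h0
    · rw [← h0, zero_mul, zero_mul]
    · have hpS := margS_pos p hX s x
      have hgpos : 0 < g (s x) y := lt_of_lt_of_le h0 (hglb x y)
      have hXx := hX x
      have hYy := hY y
      have hratio : p (x, y) / (margX p x * margY p y)
          = g (s x) y / (margS p s (s x) * margY p y) := by
        rw [div_eq_div_iff (by positivity) (by positivity)]
        linear_combination margY p y * hcross x y
      rw [hratio]
  rw [hIp]
  -- group by fibers of s
  rw [← Finset.sum_fiberwise Finset.univ s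
    (fun x => ∑ y, p (x, y) * Real.log (g (s x) y / (margS p s (s x) * margY p y)))]
  have hgrp : ∀ s0, (∑ x ∈ Finset.univ.filter (fun x => s x = s0), ∑ y,
      p (x, y) * Real.log (g (s x) y / (margS p s (s x) * margY p y)))
      = ∑ y, g s0 y * Real.log (g s0 y / (margS p s s0 * margY p y)) := by
    intro s0
    rw [Finset.sum_congr rfl fun x hx => by
      rw [(Finset.mem_filter.mp hx).2]]
    rw [Finset.sum_comm]
    refine Finset.sum_congr rfl fun y _ => ?_
    rw [← Finset.sum_mul]
  rw [Finset.sum_congr rfl fun s0 _ => hgrp s0]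
  -- reindex through e and identify with the mutual information
  rw [← Equiv.sum_comp e.symm
    (fun s0 => ∑ y, g s0 y * Real.log (g s0 y / (margS p s s0 * margY p y)))]
  have hnn : ∀ z : Fin (Fintype.card 𝒮) × 𝒴,
      0 ≤ ∑ a, (if z.1 = e (s a) then (1:ℝ) else 0) * p (a, z.2) :=
    fun z => Finset.sum_nonneg fun a _ =>
      mul_nonneg (by split_ifs <;> norm_num) (hp.1 _)
  rw [mutInfo_eq_sum _ hnn, Fintype.sum_prod_type]
  refine (Finset.sum_congr rfl fun u _ => Finset.sum_congr rfl fun y _ => ?_).symm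
  show g (e.symm u) y * Real.log (g (e.symm u) y / (margS p s (e.symm u) * margY p y))
      = (∑ a, (if u = e (s a) then (1:ℝ) else 0) * p (a, y)) *
      Real.log ((∑ a, (if u = e (s a) then (1:ℝ) else 0) * p (a, y)) /
        ((∑ b, ∑ a, (if u = e (s a) then (1:ℝ) else 0) * p (a, b)) *
         (∑ a' : Fin (Fintype.card 𝒮), ∑ a, (if a' = e (s a) then (1:ℝ) else 0) * p (a, y))))
  simp only [hfy]
  rw [hM1, hM2]

end ACH

/-- The information-bottleneck curve is bounded by `I(X;Y)`, with
equality at rate `R = H(S)` whenever `s` is sufficient. -/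
theorem ib_curve_bound_and_achievability
    [Fintype 𝒳] [Nonempty 𝒳] [Fintype 𝒴] [Nonempty 𝒴]
    [Fintype 𝒮] [Nonempty 𝒮]
    (p : 𝒳 × 𝒴 → ℝ) (hp : IsPMF p)
    (hX : ∀ x, 0 < margX p x) (hY : ∀ y, 0 < margY p y)
    (s : 𝒳 → 𝒮) :
    (∀ R : ℝ, 0 ≤ R → ibCurve p R ≤ mutInfo p) ∧
    (SuffS p s → ibCurve p (entropy (margS p s)) = mutInfo p) := by
  classical
  have hub : ∀ R : ℝ, ∀ c ∈ { c | ∃ (n : ℕ) (r : 𝒳 → Fin n → ℝ),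
      (∀ a u, 0 ≤ r a u) ∧ (∀ a, ∑ u, r a u = 1) ∧
      mutInfo (fun z : Fin n × 𝒳 => r z.2 z.1 * ∑ b, p (z.2, b)) ≤ R ∧
      c = mutInfo (fun z : Fin n × 𝒴 => ∑ a, r a z.1 * p (a, z.2)) },
      c ≤ mutInfo p := by
    rintro R c ⟨n, r, h0, h1, -, rfl⟩
    exact dpi p hp hX hY n r h0 h1
  constructor
  · intro R hR
    rw [ibCurve]
    refine csSup_le ?_ (hub R)
    refine ⟨mutInfo (fun z : Fin 1 × 𝒴 => ∑ a, (1:ℝ) * p (a, z.2)),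
      1, fun _ _ => (1:ℝ), fun _ _ => zero_le_one, fun a => ?_, ?_, rfl⟩
    · simp
    · exact le_trans (le_of_eq (mutInfo_one p hp hX)) hR
  · intro hsuff
    set e : 𝒮 ≃ Fin (Fintype.card 𝒮) := Fintype.equivFin 𝒮 with hedef
    have hmem : mutInfo p ∈ { c | ∃ (n : ℕ) (r : 𝒳 → Fin n → ℝ),
        (∀ a u, 0 ≤ r a u) ∧ (∀ a, ∑ u, r a u = 1) ∧
        mutInfo (fun z : Fin n × 𝒳 => r z.2 z.1 * ∑ b, p (z.2, b))
          ≤ entropy (margS p s) ∧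
        c = mutInfo (fun z : Fin n × 𝒴 => ∑ a, r a z.1 * p (a, z.2)) } := by
      refine ⟨Fintype.card 𝒮, fun x u => if u = e (s x) then (1:ℝ) else 0,
        fun a u => by
          show (0:ℝ) ≤ if u = e (s a) then (1:ℝ) else 0
          split_ifs <;> norm_num, fun a => ?_, ?_, ?_⟩
      · rw [Finset.sum_ite_eq' Finset.univ (e (s a)) (fun _ => (1:ℝ)),
          if_pos (Finset.mem_univ _)]
      · exact le_of_eq (rate_eq e p hp hX s)
      · exact (value_eq e p hp hX hY s hsuff).symm
    rw [ibCurve]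
    exact le_antisymm (csSup_le ⟨_, hmem⟩ (hub _))
      (le_csSup ⟨mutInfo p, hub _⟩ hmem)

end
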